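/- If the splitting result holds for k = l thieves with t(l-1) cuts and for k = m thieves with t(m-1) cuts, then it holds for k = lm thieves with t(lm-1) cuts; in particular the cut-count identity t(m-1) + m·t(l-1) = t(ml-1) holds for all positive integers t, l, m. -/

import Mathlib

open MeasureTheory Finset

def cutInterval {n : ℕ} (x : Fin n → ℝ) (i : Fin (n + 1)) : Set ℝ :=
  {r : ℝ | (∀ j : Fin n, (j : ℕ) < (i : ℕ) → x j ≤ r) ∧
    (∀ j : Fin n, (i : ℕ) ≤ (j : ℕ) → r ≤ x j)}

def NecklaceSplit (k : ℕ) : Prop :=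
  ∀ t : ℕ, 0 < t → ∀ μ : Fin t → Measure ℝ,
    (∀ j, IsProbabilityMeasure (μ j)) → (∀ j, μ j ≪ volume) →
    ∃ x : Fin (t * (k - 1)) → ℝ, Monotone x ∧
      ∃ ℓ : Fin (t * (k - 1) + 1) → Fin k,
        ∀ (i : Fin k) (j : Fin t),
          μ j (⋃ r ∈ {r : Fin (t * (k - 1) + 1) | ℓ r = i}, cutInterval x r)
            = (k : ENNReal)⁻¹

lemma exists_ge_of_lt_card {n : ℕ} {S : Finset (Fin n)} {j : Fin n}
    (h : (j : ℕ) < S.card) : ∃ j' ∈ S, j ≤ j' := by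
  by_contra hc
  push_neg at hc
  have hsub : S ⊆ Finset.Iio j := fun a ha => Finset.mem_Iio.2 (hc a ha)
  have := Finset.card_le_card hsub
  rw [Fin.card_Iio] at this
  omega

lemma exists_le_not_mem {n : ℕ} {S : Finset (Fin n)} {j : Fin n}
    (h : S.card ≤ (j : ℕ)) : ∃ j' ≤ j, j' ∉ S := by
  by_contra hc
  push_neg at hc
  have hsub : Finset.Iic j ⊆ S := fun a ha => hc a (Finset.mem_Iic.1 ha)
  have := Finset.card_le_card hsub
  rw [Fin.card_Iic] at this
  omega

lemma measurableSet_cutInterval {n : ℕ} (x : Fin n → ℝ) (i : Fin (n+1)) :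
    MeasurableSet (cutInterval x i) := by
  have heq : cutInterval x i =
      (⋂ j : Fin n, ⋂ _ : (j:ℕ) < (i:ℕ), Set.Ici (x j)) ∩
      (⋂ j : Fin n, ⋂ _ : (i:ℕ) ≤ (j:ℕ), Set.Iic (x j)) := by
    ext r
    simp [cutInterval, Set.mem_iInter]
  rw [heq]
  exact (MeasurableSet.iInter fun j => MeasurableSet.iInter fun _ => measurableSet_Ici).inter
    (MeasurableSet.iInter fun j => MeasurableSet.iInter fun _ => measurableSet_Iic)

lemma cutInterval_inter_subset {n : ℕ} (x : Fin n → ℝ) {i i' : Fin (n+1)} (h : i < i') :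
    ∃ v : ℝ, cutInterval x i ∩ cutInterval x i' ⊆ {v} := by
  have hi : (i : ℕ) < n := lt_of_lt_of_le h (Fin.is_le i')
  refine ⟨x ⟨i, hi⟩, ?_⟩
  rintro r ⟨⟨_, h2⟩, ⟨h3, _⟩⟩
  have ha : r ≤ x ⟨i, hi⟩ := h2 ⟨i, hi⟩ (le_refl _)
  have hb : x ⟨i, hi⟩ ≤ r := h3 ⟨i, hi⟩ h
  exact le_antisymm ha hb |>.symm ▸ rfl

lemma aedisjoint_cutInterval {μ : Measure ℝ} (hac : μ ≪ volume) {n : ℕ} (x : Fin n → ℝ) :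
    Pairwise (Function.onFun (MeasureTheory.AEDisjoint μ) fun i => cutInterval x i) := by
  intro i i' hne
  have key : ∀ a b : Fin (n+1), a < b → μ (cutInterval x a ∩ cutInterval x b) = 0 := by
    intro a b hab
    obtain ⟨v, hv⟩ := cutInterval_inter_subset x hab
    exact measure_mono_null hv (hac (Real.volume_singleton))
  rcases lt_or_gt_of_ne hne with h | h
  · exact key _ _ h
  · rw [Function.onFun, MeasureTheory.AEDisjoint, Set.inter_comm]
    exact key _ _ h

lemma iUnion_cutInterval {n : ℕ} {x : Fin n → ℝ} (hx : Monotone x) :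
    ⋃ i, cutInterval x i = Set.univ := by
  ext r
  simp only [Set.mem_iUnion, Set.mem_univ, iff_true]
  classical
  set S := Finset.univ.filter fun j => x j < r with hS
  have hcard : S.card ≤ n := le_trans (Finset.card_le_univ S) (by simp)
  refine ⟨⟨S.card, Nat.lt_succ_of_le hcard⟩, ?_, ?_⟩
  · intro j hj
    obtain ⟨j', hj'S, hjj'⟩ := exists_ge_of_lt_card (S := S) hj
    have : x j' < r := (Finset.mem_filter.1 hj'S).2
    exact le_of_lt (lt_of_le_of_lt (hx hjj') this)
  · intro j hj
    obtain ⟨j', hj'j, hj'not⟩ := exists_le_not_mem (S := S) hj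
    have : ¬ x j' < r := fun hlt => hj'not (Finset.mem_filter.2 ⟨Finset.mem_univ _, hlt⟩)
    exact le_trans (not_lt.1 this) (hx hj'j)

lemma cutInterval_subset {n N : ℕ} {x : Fin n → ℝ} {z : Fin N → ℝ} (hx : Monotone x)
    (e : Fin n → Fin N) (he : ∀ j, z (e j) = x j) (r : Fin (N+1)) :
    cutInterval z r ⊆ cutInterval x
      ⟨(Finset.univ.filter fun j => ((e j : ℕ) < (r:ℕ))).card,
        Nat.lt_succ_of_le (le_trans (Finset.card_le_univ _) (by simp))⟩ := by
  classical
  rintro s ⟨h1, h2⟩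
  set S := Finset.univ.filter fun j => ((e j : ℕ) < (r:ℕ)) with hS
  constructor
  · intro j hj
    obtain ⟨j', hj'S, hjj'⟩ := exists_ge_of_lt_card (S := S) hj
    have hlt : ((e j' : ℕ) < (r:ℕ)) := (Finset.mem_filter.1 hj'S).2
    calc x j ≤ x j' := hx hjj'
    _ = z (e j') := (he j').symm
    _ ≤ s := h1 (e j') hlt
  · intro j hj
    obtain ⟨j', hj'j, hj'not⟩ := exists_le_not_mem (S := S) hj
    have hge : (r:ℕ) ≤ (e j' : ℕ) := not_lt.1 fun hlt =>
      hj'not (Finset.mem_filter.2 ⟨Finset.mem_univ _, hlt⟩)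
    calc s ≤ z (e j') := h2 (e j') hge
    _ = x j' := he j'
    _ ≤ x j := hx hj'j

lemma sum_eq_of_le_ennreal {ι : Type*} {s : Finset ι} {f g : ι → ENNReal}
    (hle : ∀ i ∈ s, f i ≤ g i) (hsum : ∑ i ∈ s, f i = ∑ i ∈ s, g i)
    (htop : ∑ i ∈ s, g i ≠ ⊤) : ∀ i ∈ s, f i = g i := by
  classical
  intro i hi
  refine le_antisymm (hle i hi) ?_
  have h1 := Finset.add_sum_erase s f hi
  have h2 := Finset.add_sum_erase s g hi
  have hrest : ∑ j ∈ s.erase i, f j ≤ ∑ j ∈ s.erase i, g j :=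
    Finset.sum_le_sum fun j hj => hle j (Finset.mem_of_mem_erase hj)
  have htop' : ∑ j ∈ s.erase i, g j ≠ ⊤ := by
    intro hcon
    apply htop
    rw [← h2, hcon, add_top]
  have hfin : g i + ∑ j ∈ s.erase i, g j ≤ f i + ∑ j ∈ s.erase i, g j := by
    rw [h2, ← hsum, ← h1]
    exact add_le_add (le_refl _) hrest
  exact (ENNReal.add_le_add_iff_right htop').1 hfin

lemma sum_measure_cutInterval {μ : Measure ℝ} (hac : μ ≪ volume) (hμ : μ Set.univ = 1)
    {k : ℕ} {w : Fin k → ℝ} (hw : Monotone w) :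
    ∑ r : Fin (k+1), μ (cutInterval w r) = 1 := by
  have hd := aedisjoint_cutInterval hac w
  have hb := measure_biUnion_finset₀ (μ := μ) (s := Finset.univ)
    (f := fun r => cutInterval w r) (hd.set_pairwise _)
    (fun r _ => (measurableSet_cutInterval w r).nullMeasurableSet)
  rw [← hb]
  have hu : ⋃ r ∈ (Finset.univ : Finset (Fin (k+1))), cutInterval w r = Set.univ := by
    simpa using iUnion_cutInterval hw
  rw [hu, hμ]

theorem necklaceSplit_mul (l m : ℕ) (hl : 0 < l) (hm : 0 < m)
    (Hl : NecklaceSplit l) (Hm : NecklaceSplit m) :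
    NecklaceSplit (l * m) ∧
      ∀ t l' m' : ℕ, 0 < t → 0 < l' → 0 < m' →
        t * (m' - 1) + m' * (t * (l' - 1)) = t * (m' * l' - 1) := by
  classical
  have arith : ∀ t l' m' : ℕ, 0 < t → 0 < l' → 0 < m' →
      t * (m' - 1) + m' * (t * (l' - 1)) = t * (m' * l' - 1) := by
    intro t l' m' ht hl' hm'
    obtain ⟨a, rfl⟩ := Nat.exists_eq_succ_of_ne_zero hl'.ne'
    obtain ⟨b, rfl⟩ := Nat.exists_eq_succ_of_ne_zero hm'.ne'
    have h1 : (b+1) * (a+1) - 1 = b*a + b + a := by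
      have : (b+1)*(a+1) = b*a + b + a + 1 := by ring
      omega
    simp only [Nat.succ_eq_add_one, Nat.add_sub_cancel, h1]
    ring
  refine ⟨?_, arith⟩
  intro t ht μ hp hac
  obtain ⟨x, hxmono, ℓx, hℓx⟩ := Hm t ht μ hp hac
  set A : Fin m → Set ℝ := fun α => ⋃ r ∈ {r : Fin (t*(m-1)+1) | ℓx r = α}, cutInterval x r
    with hA
  have hAfin : ∀ α, A α
      = ⋃ a ∈ (Finset.univ.filter fun a : Fin (t*(m-1)+1) => ℓx a = α), cutInterval x a := by
    intro α; simp only [hA]; ext s; simp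
  have hAmeas : ∀ α, MeasurableSet (A α) := by
    intro α
    rw [hAfin]
    exact Finset.measurableSet_biUnion _ fun a _ => measurableSet_cutInterval x a
  have hAval : ∀ (α : Fin m) (j : Fin t), μ j (A α) = (m : ENNReal)⁻¹ := by
    intro α j
    simp only [hA]
    exact hℓx α j
  have htm : 0 < t * m := Nat.mul_pos ht hm
  set ν : Fin (t*m) → Measure ℝ := fun p =>
    (m : ENNReal) • (μ (finProdFinEquiv.symm p).1).restrict (A (finProdFinEquiv.symm p).2)
    with hν
  have hνp : ∀ p, IsProbabilityMeasure (ν p) := by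
    intro p
    constructor
    simp only [hν, Measure.smul_apply, smul_eq_mul, Measure.restrict_apply_univ]
    rw [hAval]
    exact ENNReal.mul_inv_cancel (by exact_mod_cast hm.ne') (ENNReal.natCast_ne_top m)
  have hνac : ∀ p, ν p ≪ volume := by
    intro p
    simp only [hν]
    exact (Measure.restrict_le_self.absolutelyContinuous.trans (hac _)).smul_left _
  obtain ⟨y, hymono, ℓy, hℓy⟩ := Hl (t*m) htm ν hνp hνac
  set B : Fin l → Set ℝ := fun β => ⋃ r ∈ {r : Fin (t*m*(l-1)+1) | ℓy r = β}, cutInterval y r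
    with hB
  have hBfin : ∀ β, B β
      = ⋃ b ∈ (Finset.univ.filter fun b : Fin (t*m*(l-1)+1) => ℓy b = β), cutInterval y b := by
    intro β; simp only [hB]; ext s; simp
  have hBmeas : ∀ β, MeasurableSet (B β) := by
    intro β
    rw [hBfin]
    exact Finset.measurableSet_biUnion _ fun b _ => measurableSet_cutInterval y b
  have hm0 : (m : ENNReal) ≠ 0 := by exact_mod_cast hm.ne'
  have key : ∀ (α : Fin m) (β : Fin l) (j : Fin t),
      μ j (A α ∩ B β) = ((l*m : ℕ) : ENNReal)⁻¹ := by
    intro α β j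
    have h1 := hℓy β (finProdFinEquiv (j, α))
    simp only [hν, Equiv.symm_apply_apply] at h1
    have hBeq : (⋃ r ∈ {r : Fin (t*m*(l-1)+1) | ℓy r = β}, cutInterval y r) = B β := by
      rw [hB]
    rw [hBeq, Measure.smul_apply, smul_eq_mul, Measure.restrict_apply (hBmeas β),
      Set.inter_comm] at h1
    have h2 : μ j (A α ∩ B β) = (m:ENNReal)⁻¹ * ((m:ENNReal) * μ j (A α ∩ B β)) := by
      rw [← mul_assoc, ENNReal.inv_mul_cancel hm0 (ENNReal.natCast_ne_top m), one_mul]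
    rw [h2, h1]
    rw [Nat.cast_mul, ENNReal.mul_inv (Or.inr (ENNReal.natCast_ne_top m))
      (Or.inl (ENNReal.natCast_ne_top l)), mul_comm]
  have harith : t * (l * m - 1) = t*(m-1) + t*m*(l-1) := by
    have h := arith t l m ht hl hm
    rw [mul_comm l m, ← h]
    ring
  set f : Fin (t*(m-1) + t*m*(l-1)) → ℝ := Fin.append x y with hf
  set σ := Tuple.sort f with hσ
  have hzmono0 : Monotone (f ∘ σ) := Tuple.monotone_sort f
  set z : Fin (t * (l * m - 1)) → ℝ := fun i => (f ∘ σ) (Fin.cast harith i) with hz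
  have hzmono : Monotone z := by
    intro a b hab
    exact hzmono0 (show (Fin.cast harith a : Fin _) ≤ Fin.cast harith b from hab)
  set ex : Fin (t*(m-1)) → Fin (t * (l * m - 1)) := fun j =>
    Fin.cast harith.symm (σ.symm (Fin.castAdd (t*m*(l-1)) j)) with hex
  set ey : Fin (t*m*(l-1)) → Fin (t * (l * m - 1)) := fun j =>
    Fin.cast harith.symm (σ.symm (Fin.natAdd (t*(m-1)) j)) with hey
  have hcastcast : ∀ w : Fin (t*(m-1) + t*m*(l-1)),
      Fin.cast harith (Fin.cast harith.symm w) = w := fun w => Fin.ext rfl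
  have hzex : ∀ j, z (ex j) = x j := by
    intro j
    show (f ∘ σ) (Fin.cast harith (Fin.cast harith.symm (σ.symm (Fin.castAdd _ j)))) = x j
    rw [hcastcast]
    show f (σ (σ.symm (Fin.castAdd _ j))) = x j
    rw [Equiv.apply_symm_apply]
    exact Fin.append_left x y j
  have hzey : ∀ j, z (ey j) = y j := by
    intro j
    show (f ∘ σ) (Fin.cast harith (Fin.cast harith.symm (σ.symm (Fin.natAdd _ j)))) = y j
    rw [hcastcast]
    show f (σ (σ.symm (Fin.natAdd _ j))) = y j
    rw [Equiv.apply_symm_apply]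
    exact Fin.append_right x y j
  set φ : Fin (t * (l * m - 1)+1) → Fin (t*(m-1)+1) := fun r =>
    ⟨(Finset.univ.filter fun j => ((ex j : ℕ) < (r:ℕ))).card,
      Nat.lt_succ_of_le (le_trans (Finset.card_le_univ _) (by simp))⟩ with hφdef
  set ψ : Fin (t * (l * m - 1)+1) → Fin (t*m*(l-1)+1) := fun r =>
    ⟨(Finset.univ.filter fun j => ((ey j : ℕ) < (r:ℕ))).card,
      Nat.lt_succ_of_le (le_trans (Finset.card_le_univ _) (by simp))⟩ with hψdef
  have hφ : ∀ r, cutInterval z r ⊆ cutInterval x (φ r) := fun r =>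
    cutInterval_subset hxmono ex hzex r
  have hψ : ∀ r, cutInterval z r ⊆ cutInterval y (ψ r) := fun r =>
    cutInterval_subset hymono ey hzey r
  set ℓz : Fin (t * (l * m - 1)+1) → Fin (l*m) := fun r =>
    finProdFinEquiv (ℓy (ψ r), ℓx (φ r)) with hℓz
  refine ⟨z, hzmono, ℓz, ?_⟩
  intro i j
  set α : Fin m := (finProdFinEquiv.symm i).2 with hα
  set β : Fin l := (finProdFinEquiv.symm i).1 with hβ
  have hi : finProdFinEquiv (β, α) = i := by
    rw [hβ, hα, Prod.mk.eta]
    exact Equiv.apply_symm_apply _ i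
  have hlabel : ∀ r, ℓz r = i ↔ (ℓx (φ r) = α ∧ ℓy (ψ r) = β) := by
    intro r
    simp only [hℓz]
    rw [← hi]
    simp only [EmbeddingLike.apply_eq_iff_eq, Prod.mk.injEq]
    tauto
  have hGdisj := aedisjoint_cutInterval (hac j) z
  have hxdisj := aedisjoint_cutInterval (hac j) x
  have hydisj := aedisjoint_cutInterval (hac j) y
  set c : Fin (t*(m-1)+1) × Fin (t*m*(l-1)+1) → ENNReal := fun p =>
    ∑ r ∈ Finset.univ.filter (fun r : Fin (t * (l * m - 1)+1) => (φ r, ψ r) = p),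
      μ j (cutInterval z r) with hc
  set d : Fin (t*(m-1)+1) × Fin (t*m*(l-1)+1) → ENNReal := fun p =>
    μ j (cutInterval x p.1 ∩ cutInterval y p.2) with hd
  have hcd : ∀ p, c p ≤ d p := by
    intro p
    simp only [hc, hd]
    have hb := measure_biUnion_finset₀ (μ := μ j)
      (s := Finset.univ.filter (fun r : Fin (t * (l * m - 1)+1) => (φ r, ψ r) = p))
      (f := fun r => cutInterval z r)
      (hGdisj.set_pairwise _) (fun r _ => (measurableSet_cutInterval z r).nullMeasurableSet)
    rw [← hb]
    refine measure_mono (Set.iUnion₂_subset ?_)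
    intro r hr
    have hrp : (φ r, ψ r) = p := (Finset.mem_filter.1 hr).2
    have h1 : φ r = p.1 := by rw [← hrp]
    have h2 : ψ r = p.2 := by rw [← hrp]
    exact Set.subset_inter (h1 ▸ hφ r) (h2 ▸ hψ r)
  have hsumc : ∑ p, c p = 1 := by
    simp only [hc]
    rw [Finset.sum_fiberwise Finset.univ (fun r : Fin (t * (l * m - 1)+1) => (φ r, ψ r))
      (fun r => μ j (cutInterval z r))]
    exact sum_measure_cutInterval (hac j) (hp j).measure_univ hzmono
  have hrow : ∀ a : Fin (t*(m-1)+1),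
      ∑ b : Fin (t*m*(l-1)+1), μ j (cutInterval x a ∩ cutInterval y b)
        = μ j (cutInterval x a) := by
    intro a
    have hpair : Pairwise
        (Function.onFun (MeasureTheory.AEDisjoint (μ j))
          fun b : Fin (t*m*(l-1)+1) => cutInterval x a ∩ cutInterval y b) := by
      intro b b' hbb'
      exact measure_mono_null
        (Set.inter_subset_inter Set.inter_subset_right Set.inter_subset_right)
        (hydisj hbb')
    have hb := measure_biUnion_finset₀ (μ := μ j)
      (s := (Finset.univ : Finset (Fin (t*m*(l-1)+1)))) (hpair.set_pairwise _)
      (fun b _ => ((measurableSet_cutInterval x a).inter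
        (measurableSet_cutInterval y b)).nullMeasurableSet)
    rw [← hb]
    congr 1
    have huni : ⋃ b ∈ (Finset.univ : Finset (Fin (t*m*(l-1)+1))),
        (cutInterval x a ∩ cutInterval y b)
        = cutInterval x a ∩ ⋃ b, cutInterval y b := by
      simp [Set.inter_iUnion]
    rw [huni, iUnion_cutInterval hymono, Set.inter_univ]
  have hsumd : ∑ p, d p = 1 := by
    simp only [hd]
    rw [Fintype.sum_prod_type]
    calc ∑ a : Fin (t*(m-1)+1), ∑ b : Fin (t*m*(l-1)+1),
          μ j (cutInterval x a ∩ cutInterval y b)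
        = ∑ a : Fin (t*(m-1)+1), μ j (cutInterval x a) :=
          Finset.sum_congr rfl fun a _ => hrow a
      _ = 1 := sum_measure_cutInterval (hac j) (hp j).measure_univ hxmono
  have hceqd : ∀ p, c p = d p := by
    intro p
    exact sum_eq_of_le_ennreal (fun q _ => hcd q) (hsumc.trans hsumd.symm)
      (by rw [hsumd]; exact ENNReal.one_ne_top) p (Finset.mem_univ p)
  have hgoalset : (⋃ r ∈ {r : Fin (t * (l * m - 1)+1) | ℓz r = i}, cutInterval z r)
      = ⋃ r ∈ (Finset.univ.filter fun r : Fin (t * (l * m - 1)+1) => ℓz r = i),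
          cutInterval z r := by
    ext s; simp
  rw [hgoalset, measure_biUnion_finset₀ (hGdisj.set_pairwise _)
    (fun r _ => (measurableSet_cutInterval z r).nullMeasurableSet)]
  have hfiber := Finset.sum_fiberwise_eq_sum_filter Finset.univ
    (Finset.univ.filter fun p : Fin (t*(m-1)+1) × Fin (t*m*(l-1)+1) =>
      ℓx p.1 = α ∧ ℓy p.2 = β)
    (fun r : Fin (t * (l * m - 1)+1) => (φ r, ψ r)) (fun r => μ j (cutInterval z r))
  have hfilter_eq : (Finset.univ.filter fun r : Fin (t * (l * m - 1)+1) =>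
      (φ r, ψ r) ∈ (Finset.univ.filter fun p : Fin (t*(m-1)+1) × Fin (t*m*(l-1)+1) =>
        ℓx p.1 = α ∧ ℓy p.2 = β))
      = Finset.univ.filter fun r : Fin (t * (l * m - 1)+1) => ℓz r = i := by
    ext r
    simp only [Finset.mem_filter, Finset.mem_univ, true_and]
    rw [hlabel r]
  rw [hfilter_eq] at hfiber
  rw [← hfiber]
  have hstep2 : ∑ p ∈ Finset.univ.filter
        (fun p : Fin (t*(m-1)+1) × Fin (t*m*(l-1)+1) => ℓx p.1 = α ∧ ℓy p.2 = β),
      (∑ r ∈ Finset.univ.filter (fun r : Fin (t * (l * m - 1)+1) => (φ r, ψ r) = p),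
        μ j (cutInterval z r))
      = ∑ p ∈ Finset.univ.filter
        (fun p : Fin (t*(m-1)+1) × Fin (t*m*(l-1)+1) => ℓx p.1 = α ∧ ℓy p.2 = β), d p :=
    Finset.sum_congr rfl fun p _ => hceqd p
  rw [hstep2]
  have hfs : (Finset.univ.filter fun p : Fin (t*(m-1)+1) × Fin (t*m*(l-1)+1) =>
        ℓx p.1 = α ∧ ℓy p.2 = β)
      = (Finset.univ.filter fun a : Fin (t*(m-1)+1) => ℓx a = α) ×ˢ
        (Finset.univ.filter fun b : Fin (t*m*(l-1)+1) => ℓy b = β) := by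
    ext p
    simp [Finset.mem_product]
  rw [hfs]
  have hpairprod : Pairwise
      (Function.onFun (MeasureTheory.AEDisjoint (μ j))
        fun p : Fin (t*(m-1)+1) × Fin (t*m*(l-1)+1) =>
          cutInterval x p.1 ∩ cutInterval y p.2) := by
    intro p q hpq
    rcases (em (p.1 = q.1)) with h1 | h1
    · have h2 : p.2 ≠ q.2 := fun h2 => hpq (Prod.ext h1 h2)
      exact measure_mono_null
        (Set.inter_subset_inter Set.inter_subset_right Set.inter_subset_right)
        (hydisj h2)
    · exact measure_mono_null
        (Set.inter_subset_inter Set.inter_subset_left Set.inter_subset_left)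
        (hxdisj h1)
  have hbprod := measure_biUnion_finset₀ (μ := μ j)
    (s := (Finset.univ.filter fun a : Fin (t*(m-1)+1) => ℓx a = α) ×ˢ
      (Finset.univ.filter fun b : Fin (t*m*(l-1)+1) => ℓy b = β))
    (hpairprod.set_pairwise _)
    (fun p _ => ((measurableSet_cutInterval x p.1).inter
      (measurableSet_cutInterval y p.2)).nullMeasurableSet)
  have hdsum : ∑ p ∈ (Finset.univ.filter fun a : Fin (t*(m-1)+1) => ℓx a = α) ×ˢ
        (Finset.univ.filter fun b : Fin (t*m*(l-1)+1) => ℓy b = β), d p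
      = μ j (A α ∩ B β) := by
    simp only [hd]
    rw [← hbprod]
    congr 1
    rw [hAfin α, hBfin β]
    ext s
    simp only [Set.mem_iUnion, Finset.mem_product, Finset.mem_filter, Finset.mem_univ,
      true_and, Set.mem_inter_iff, Prod.exists]
    constructor
    · rintro ⟨a, b, ⟨ha, hb⟩, hsa, hsb⟩
      exact ⟨⟨a, ha, hsa⟩, ⟨b, hb, hsb⟩⟩
    · rintro ⟨⟨a, ha, hsa⟩, ⟨b, hb, hsb⟩⟩
      exact ⟨a, b, ⟨ha, hb⟩, hsa, hsb⟩
  rw [hdsum, key α β j]
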